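/- For polynomials f, g, h in one complex variable and any κ ∈ ℂ, the product f *_κ g := Σ_{ℓ≥0} (1/ℓ!)(κ/2)^ℓ (∂_ζ^ℓ f)(∂_ζ^ℓ g) is associative: (f *_κ g) *_κ h = f *_κ (g *_κ h). -/

import Mathlib

open Polynomial Finset

/-- Iterated derivative on polynomials. -/
noncomputable def pderiv : ℕ → Polynomial ℂ → Polynomial ℂ :=
  fun ℓ => (fun p => Polynomial.derivative p)^[ℓ]

/-- The commutative deformed product `f *_κ g = Σ_ℓ (1/ℓ!)(κ/2)^ℓ (∂^ℓ f)(∂^ℓ g)`;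
the sum is finite on polynomials, all terms with `ℓ > natDegree f + natDegree g` vanish. -/
noncomputable def starK (κ : ℂ) (f g : Polynomial ℂ) : Polynomial ℂ :=
  ∑ ℓ ∈ Finset.range (f.natDegree + g.natDegree + 1),
    Polynomial.C ((κ / 2) ^ ℓ / (Nat.factorial ℓ : ℂ)) * pderiv ℓ f * pderiv ℓ g


lemma pderiv_apply (ℓ : ℕ) (p : Polynomial ℂ) : pderiv ℓ p = Polynomial.derivative^[ℓ] p := rfl

lemma pderiv_eq_zero {p : Polynomial ℂ} {ℓ : ℕ} (h : p.natDegree < ℓ) : pderiv ℓ p = 0 :=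
  Polynomial.iterate_derivative_eq_zero h

lemma pderiv_natDegree_le (p : Polynomial ℂ) (ℓ : ℕ) : (pderiv ℓ p).natDegree ≤ p.natDegree :=
  (Polynomial.natDegree_iterate_derivative p ℓ).trans (Nat.sub_le _ _)

lemma starK_eq (κ : ℂ) (f g : Polynomial ℂ) {N : ℕ} (hN : f.natDegree + g.natDegree + 1 ≤ N) :
    starK κ f g = ∑ ℓ ∈ Finset.range N,
      Polynomial.C ((κ / 2) ^ ℓ / (Nat.factorial ℓ : ℂ)) * pderiv ℓ f * pderiv ℓ g := by
  unfold starK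
  refine Finset.sum_subset (Finset.range_subset_range.2 hN) ?_
  intro ℓ _ hℓ
  rw [Finset.mem_range, not_lt] at hℓ
  rw [pderiv_eq_zero (p := f) (by omega)]
  ring

lemma natDegree_starK_le (κ : ℂ) (f g : Polynomial ℂ) :
    (starK κ f g).natDegree ≤ f.natDegree + g.natDegree := by
  unfold starK
  refine Polynomial.natDegree_sum_le_of_forall_le _ _ fun ℓ _ => ?_
  refine Polynomial.natDegree_mul_le.trans
    (add_le_add (Polynomial.natDegree_mul_le.trans ?_) (pderiv_natDegree_le g ℓ))
  simpa using pderiv_natDegree_le f ℓ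

lemma starK_comm (κ : ℂ) (f g : Polynomial ℂ) : starK κ f g = starK κ g f := by
  unfold starK
  rw [add_comm g.natDegree]
  exact Finset.sum_congr rfl fun ℓ _ => by ring

lemma tri_sum {M : Type*} [AddCommMonoid M] (N : ℕ) (G : ℕ → ℕ → M)
    (hG : ∀ i j, N ≤ i + j → G i j = 0) :
    ∑ m ∈ Finset.range N, ∑ i ∈ Finset.range (m + 1), G i (m - i)
      = ∑ i ∈ Finset.range N, ∑ j ∈ Finset.range N, G i j := by
  have key : ∀ K : ℕ, ∑ m ∈ Finset.range K, ∑ i ∈ Finset.range (m + 1), G i (m - i)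
      = ∑ i ∈ Finset.range K, ∑ j ∈ Finset.range (K - i), G i j := by
    intro K
    induction K with
    | zero => simp
    | succ K ih =>
      have h1 : ∀ i ∈ Finset.range K, ∑ j ∈ Finset.range (K + 1 - i), G i j
          = ∑ j ∈ Finset.range (K - i), G i j + G i (K - i) := by
        intro i hi
        rw [Finset.mem_range] at hi
        rw [show K + 1 - i = (K - i) + 1 from by omega, Finset.sum_range_succ]
      rw [Finset.sum_range_succ (fun m => ∑ i ∈ Finset.range (m + 1), G i (m - i)) K, ih,
        Finset.sum_range_succ (fun i => ∑ j ∈ Finset.range (K + 1 - i), G i j) K,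
        Finset.sum_congr rfl h1, Finset.sum_add_distrib,
        Finset.sum_range_succ (fun i => G i (K - i)) K]
      simp [add_assoc]
  rw [key]
  refine Finset.sum_congr rfl fun i hi => ?_
  rw [Finset.mem_range] at hi
  refine Finset.sum_subset (Finset.range_subset_range.2 (by omega)) fun j _ hj => ?_
  rw [Finset.mem_range, not_lt] at hj
  exact hG i j (by omega)

lemma expandL (κ : ℂ) (f g h : Polynomial ℂ) {N : ℕ}
    (hN : f.natDegree + g.natDegree + h.natDegree + 1 ≤ N) :
    starK κ (starK κ f g) h
      = ∑ ℓ ∈ Finset.range N, ∑ i ∈ Finset.range N, ∑ j ∈ Finset.range N,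
          Polynomial.C ((κ / 2) ^ (ℓ + i + j) /
              ((Nat.factorial ℓ : ℂ) * (Nat.factorial i : ℂ) * (Nat.factorial j : ℂ)))
            * (pderiv (ℓ + i) f * pderiv (ℓ + j) g * pderiv (i + j) h) := by
  have hd := natDegree_starK_le κ f g
  rw [starK_eq κ (starK κ f g) h (N := N) (by omega), starK_eq κ f g (N := N) (by omega)]
  simp only [pderiv_apply, mul_assoc, Polynomial.iterate_derivative_sum,
    Polynomial.iterate_derivative_C_mul]
  simp only [Polynomial.iterate_derivative_mul, ← Function.iterate_add_apply,
    Finset.mul_sum, Finset.sum_mul]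
  rw [Finset.sum_comm]
  refine Finset.sum_congr rfl fun ℓ _ => ?_
  have hG : ∀ i j : ℕ, N ≤ i + j →
      (Polynomial.C ((κ / 2) ^ (ℓ + j + i) /
          ((Nat.factorial ℓ : ℂ) * ((Nat.factorial j : ℂ) * (Nat.factorial i : ℂ)))) *
        (Polynomial.derivative^[ℓ + j] f *
          (Polynomial.derivative^[ℓ + i] g * Polynomial.derivative^[j + i] h))) = 0 := by
    intro i j hij
    rw [Polynomial.iterate_derivative_eq_zero (x := j + i) (show h.natDegree < j + i by omega)]
    ring
  trans (∑ i ∈ Finset.range N, ∑ j ∈ Finset.range N,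
      Polynomial.C ((κ / 2) ^ (ℓ + j + i) /
          ((Nat.factorial ℓ : ℂ) * ((Nat.factorial j : ℂ) * (Nat.factorial i : ℂ)))) *
        (Polynomial.derivative^[ℓ + j] f *
          (Polynomial.derivative^[ℓ + i] g * Polynomial.derivative^[j + i] h)))
  · rw [← tri_sum N _ hG]
    refine Finset.sum_congr rfl fun m _ => Finset.sum_congr rfl fun k hk => ?_
    rw [Finset.mem_range, Nat.lt_succ_iff] at hk
    show _ = _
    rw [show m - k + ℓ = ℓ + (m - k) from by omega, show k + ℓ = ℓ + k from by omega,
      show m - k + k = m from by omega, show ℓ + (m - k) + k = ℓ + m from by omega]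
    rw [nsmul_eq_mul, ← Polynomial.C_eq_natCast, Nat.cast_choose ℂ hk]
    have h1 : (Nat.factorial ℓ : ℂ) ≠ 0 := Nat.cast_ne_zero.mpr ℓ.factorial_ne_zero
    have h2 : (Nat.factorial m : ℂ) ≠ 0 := Nat.cast_ne_zero.mpr m.factorial_ne_zero
    have h3 : (Nat.factorial k : ℂ) ≠ 0 := Nat.cast_ne_zero.mpr k.factorial_ne_zero
    have h4 : (Nat.factorial (m - k) : ℂ) ≠ 0 := Nat.cast_ne_zero.mpr (m - k).factorial_ne_zero
    have e1 : (κ / 2) ^ (ℓ + m) / ((Nat.factorial ℓ : ℂ) *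
          ((Nat.factorial (m - k) : ℂ) * (Nat.factorial k : ℂ)))
        = (κ / 2) ^ m / (Nat.factorial m : ℂ) * ((κ / 2) ^ ℓ / (Nat.factorial ℓ : ℂ) *
            ((Nat.factorial m : ℂ) / ((Nat.factorial k : ℂ) * (Nat.factorial (m - k) : ℂ)))) := by
      rw [pow_add]
      field_simp
    rw [e1, map_mul, map_mul]
    ring
  · rw [Finset.sum_comm]

theorem starK_assoc (κ : ℂ) (f g h : Polynomial ℂ) :
    starK κ (starK κ f g) h = starK κ f (starK κ g h) := by
  rw [starK_comm κ f (starK κ g h),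
    expandL κ f g h (N := f.natDegree + g.natDegree + h.natDegree + 1) le_rfl,
    expandL κ g h f (N := f.natDegree + g.natDegree + h.natDegree + 1) (by omega)]
  conv_rhs => rw [Finset.sum_comm]
  refine Finset.sum_congr rfl fun a _ => ?_
  conv_rhs => rw [Finset.sum_comm]
  refine Finset.sum_congr rfl fun b _ => Finset.sum_congr rfl fun c _ => ?_
  rw [show c + a + b = a + b + c from by omega, show c + a = a + c from by omega,
    show c + b = b + c from by omega,
    show (Nat.factorial c : ℂ) * (Nat.factorial a : ℂ) * (Nat.factorial b : ℂ)
      = (Nat.factorial a : ℂ) * (Nat.factorial b : ℂ) * (Nat.factorial c : ℂ) from by ring]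
  ring
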